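/- Fix p₀ ≠ 0 and let q, π : ℝ → ℝ be differentiable functions satisfying, for all t: dq/dt = −2π(t)/(5p₀) and dπ/dt = −(2/3)p₀ (q(t) + 2π(t)/(5p₀)). Then the function y(t) := π(t) + p₀ q(t) satisfies y(t) = y(0) e^{−(2/3)t} for all t. In particular, if π(0) = −p₀ q(0), then π(t) = −p₀ q(t) for all t, and hence dπ/dt = −p₀ dq/dt along the whole trajectory. -/

import Mathlib

/-- Gauge-fixed isobaric evolution of the ideal gas: y = π + p₀q satisfies
y(t) = y(0)e^{−(2/3)t}; in particular if π(0) = −p₀q(0) then π = −p₀q for all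
times and dπ/dt = −p₀ dq/dt along the whole trajectory. -/
theorem stmt_18 (p₀ : ℝ) (hp₀ : p₀ ≠ 0) (q π : ℝ → ℝ)
    (hq : ∀ t : ℝ, HasDerivAt q (-2 * π t / (5 * p₀)) t)
    (hπ : ∀ t : ℝ, HasDerivAt π (-(2/3) * p₀ * (q t + 2 * π t / (5 * p₀))) t) :
    (∀ t : ℝ, π t + p₀ * q t = (π 0 + p₀ * q 0) * Real.exp (-(2/3) * t)) ∧
    (π 0 = -(p₀ * q 0) →
      (∀ t : ℝ, π t = -(p₀ * q t)) ∧ ∀ t : ℝ, deriv π t = -p₀ * deriv q t) := by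
  have hy : ∀ t : ℝ, HasDerivAt (fun t => π t + p₀ * q t)
      (-(2/3) * (π t + p₀ * q t)) t := by
    intro t
    have h := (hπ t).add ((hq t).const_mul p₀)
    refine h.congr_deriv ?_
    field_simp
    ring
  -- g t := y t * exp ((2/3) t) is constant
  have hg : ∀ t : ℝ, HasDerivAt (fun t => (π t + p₀ * q t) * Real.exp ((2/3) * t))
      0 t := by
    intro t
    have he : HasDerivAt (fun t : ℝ => Real.exp ((2/3) * t))
        (Real.exp ((2/3) * t) * (2/3)) t := by
      simpa [Function.comp_def] using (Real.hasDerivAt_exp ((2/3) * t)).comp t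
        ((hasDerivAt_id t).const_mul (2/3 : ℝ))
    have := (hy t).mul he
    refine this.congr_deriv ?_
    ring
  have hconst : ∀ t : ℝ, (π t + p₀ * q t) * Real.exp ((2/3) * t)
      = (π 0 + p₀ * q 0) * Real.exp ((2/3) * 0) := by
    intro t
    exact is_const_of_deriv_eq_zero (fun x => (hg x).differentiableAt)
      (fun x => (hg x).deriv) t 0
  have hmain : ∀ t : ℝ, π t + p₀ * q t = (π 0 + p₀ * q 0) * Real.exp (-(2/3) * t) := by
    intro t
    have h := hconst t
    have hne : Real.exp ((2/3) * t) ≠ 0 := Real.exp_ne_zero _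
    rw [show (-(2/3) * t : ℝ) = -((2/3)*t) by ring, Real.exp_neg]
    field_simp at h ⊢
    simpa using h
  refine ⟨hmain, fun h0 => ?_⟩
  have hzero : ∀ t : ℝ, π t = -(p₀ * q t) := by
    intro t
    have := hmain t
    rw [h0] at this
    simp at this
    linarith
  refine ⟨hzero, fun t => ?_⟩
  rw [(hπ t).deriv, (hq t).deriv, hzero t]
  field_simp
  ring
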